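/- Let s, φ ∈ C¹_FF([0,1]) and g₁, g₂ ∈ 𝒢 satisfy s∘g₁ = φ∘g₂. Then ∫₀¹ |s'(u)| du = ∫₀¹ |φ'(u)| du, i.e., ‖s'‖₁ = ‖φ'‖₁. -/

import Mathlib

open Set MeasureTheory Filter Topology
open scoped ENNReal NNReal

/-- `g` is piecewise-C¹ on `[0,1]`: continuous, differentiable except at finitely many
points, with derivative continuous off that finite exceptional set. -/
def PiecewiseC1 (g : ℝ → ℝ) : Prop :=
  ContinuousOn g (Set.Icc 0 1) ∧
  ∃ S : Finset ℝ,
    (∀ x ∈ Set.Icc (0:ℝ) 1 \ S, DifferentiableAt ℝ g x) ∧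
    ContinuousOn (deriv g) (Set.Icc 0 1 \ S)

/-- `g` has finitely many flat regions: the zero set of `g'` in `[0,1]` has finitely many
connected components. -/
def FiniteFlats (g : ℝ → ℝ) : Prop :=
  {C : Set ℝ | ∃ x ∈ {y ∈ Set.Icc (0:ℝ) 1 | deriv g y = 0},
      C = connectedComponentIn {y ∈ Set.Icc (0:ℝ) 1 | deriv g y = 0} x}.Finite

/-- The class C¹_FF([0,1]). -/
def C1FF (g : ℝ → ℝ) : Prop := PiecewiseC1 g ∧ FiniteFlats g

/-- The set 𝒢 of admissible time warps: C¹_FF, non-decreasing on `[0,1]`,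
with `g 0 = 0` and `g 1 = 1`. -/
def InG (g : ℝ → ℝ) : Prop :=
  C1FF g ∧ MonotoneOn g (Set.Icc 0 1) ∧ g 0 = 0 ∧ g 1 = 1

/-- `‖f'‖₁ = ∫₀¹ |f'(x)| dx`. -/
noncomputable def normD1 (f : ℝ → ℝ) : ℝ := ∫ x in (0:ℝ)..1, |deriv f x|

noncomputable def nud (f : ℝ → ℝ) : Measure ℝ :=
  volume.withDensity (fun x => (‖deriv f x‖₊ : ℝ≥0∞))

lemma nud_apply (f : ℝ → ℝ) {s : Set ℝ} (hs : MeasurableSet s) :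
    nud f s = ∫⁻ x in s, (‖deriv f x‖₊ : ℝ≥0∞) :=
  withDensity_apply _ hs

lemma nud_singleton (f : ℝ → ℝ) (x : ℝ) : nud f {x} = 0 :=
  (withDensity_absolutelyContinuous volume _) (by simp)

lemma ftc_bound (f : ℝ → ℝ) {a b c d : ℝ} (hcd : c ≤ d) (hsub : Icc c d ⊆ Ioo a b)
    (hdiff : ∀ x ∈ Ioo a b, DifferentiableAt ℝ f x)
    (hcont : ContinuousOn (deriv f) (Ioo a b)) :
    |f d - f c| ≤ (nud f (Ioc c d)).toReal := by
  have h1 : ∀ x ∈ uIcc c d, HasDerivAt f (deriv f x) x := by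
    intro x hx
    rw [uIcc_of_le hcd] at hx
    exact (hdiff x (hsub hx)).hasDerivAt
  have h2 : IntervalIntegrable (deriv f) volume c d :=
    (hcont.mono hsub).intervalIntegrable_of_Icc hcd
  have heq : ∫ y in c..d, deriv f y = f d - f c :=
    intervalIntegral.integral_eq_sub_of_hasDerivAt h1 h2
  calc |f d - f c| = ‖∫ y in Ioc c d, deriv f y‖ := by
        rw [← heq, intervalIntegral.integral_of_le hcd, Real.norm_eq_abs]
    _ ≤ (∫⁻ y in Ioc c d, ENNReal.ofReal ‖deriv f y‖).toReal :=
        norm_integral_le_lintegral_norm _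
    _ = (nud f (Ioc c d)).toReal := by
        rw [nud_apply f measurableSet_Ioc]
        congr 1
        exact lintegral_congr fun x => ofReal_norm_eq_enorm _

lemma edist_le_nud (f : ℝ → ℝ) {a b : ℝ} (hf : ContinuousOn f (Icc a b))
    (hdiff : ∀ x ∈ Ioo a b, DifferentiableAt ℝ f x)
    (hcont : ContinuousOn (deriv f) (Ioo a b))
    {c d : ℝ} (hc : c ∈ Icc a b) (hd : d ∈ Icc a b) (hcd : c ≤ d) :
    edist (f c) (f d) ≤ nud f (Ioc c d) := by
  rcases eq_or_lt_of_le hcd with rfl | hlt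
  · simp
  by_cases htop : nud f (Ioc c d) = ⊤
  · simp [htop]
  set δ : ℕ → ℝ := fun n => (d - c) / (n + 2) with hδdef
  have hδpos : ∀ n, 0 < δ n := fun n => div_pos (by linarith) (by positivity)
  have hδle : ∀ n, δ n ≤ (d - c) / 2 := by
    intro n
    apply div_le_div_of_nonneg_left (by linarith) (by norm_num)
    · push_cast; linarith [Nat.cast_nonneg (α := ℝ) n]
  have key : ∀ n, |f (d - δ n) - f (c + δ n)| ≤ (nud f (Ioc c d)).toReal := by
    intro n
    have h1 : c + δ n ≤ d - δ n := by linarith [hδle n]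
    have hsub : Icc (c + δ n) (d - δ n) ⊆ Ioo a b := by
      intro x hx
      constructor
      · have := hδpos n; have := hc.1; simp only [mem_Icc] at hx; linarith [hx.1]
      · have := hδpos n; have := hd.2; simp only [mem_Icc] at hx; linarith [hx.2]
    refine (ftc_bound f h1 hsub hdiff hcont).trans (ENNReal.toReal_mono htop (measure_mono ?_))
    exact Ioc_subset_Ioc (by linarith [hδpos n]) (by linarith [hδpos n])
  have hδ0 : Tendsto δ atTop (𝓝 0) := by
    have h2 : Tendsto (fun n : ℕ => ((n : ℝ) + 2)) atTop atTop :=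
      tendsto_atTop_add_const_right _ 2 tendsto_natCast_atTop_atTop
    simpa [hδdef] using Tendsto.div_atTop (tendsto_const_nhds (x := d - c)) h2
  have hcc : Tendsto (fun n => c + δ n) atTop (𝓝[Icc a b] c) := by
    apply tendsto_nhdsWithin_of_tendsto_nhds_of_eventually_within
    · simpa using (tendsto_const_nhds (x := c)).add hδ0
    · filter_upwards with n
      exact ⟨by linarith [hδpos n, hc.1], by linarith [hδle n, hd.2]⟩
  have hdd : Tendsto (fun n => d - δ n) atTop (𝓝[Icc a b] d) := by
    apply tendsto_nhdsWithin_of_tendsto_nhds_of_eventually_within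
    · simpa using (tendsto_const_nhds (x := d)).sub hδ0
    · filter_upwards with n
      exact ⟨by linarith [hδle n, hc.1], by linarith [hδpos n, hd.2]⟩
  have hlim : Tendsto (fun n => |f (d - δ n) - f (c + δ n)|) atTop (𝓝 |f d - f c|) :=
    (((hf d hd).tendsto.comp hdd).sub ((hf c hc).tendsto.comp hcc)).abs
  have hfin : |f d - f c| ≤ (nud f (Ioc c d)).toReal :=
    le_of_tendsto hlim (Eventually.of_forall key)
  calc edist (f c) (f d) = ENNReal.ofReal |f d - f c| := by
        rw [edist_dist, Real.dist_eq, abs_sub_comm]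
    _ ≤ ENNReal.ofReal (nud f (Ioc c d)).toReal := ENNReal.ofReal_le_ofReal hfin
    _ = nud f (Ioc c d) := ENNReal.ofReal_toReal htop

lemma sum_Ioc (μ : Measure ℝ) {u : ℕ → ℝ} (hu : Monotone u) (n : ℕ) :
    ∑ i ∈ Finset.range n, μ (Ioc (u i) (u (i + 1))) = μ (Ioc (u 0) (u n)) := by
  induction n with
  | zero => simp
  | succ n ih =>
    rw [Finset.sum_range_succ, ih,
      ← measure_union (Ioc_disjoint_Ioc_of_le le_rfl) measurableSet_Ioc,
      Ioc_union_Ioc_eq_Ioc (hu (Nat.zero_le n)) (hu (Nat.le_succ n))]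

lemma evar_le_nud (f : ℝ → ℝ) {a b : ℝ} (hf : ContinuousOn f (Icc a b))
    (hdiff : ∀ x ∈ Ioo a b, DifferentiableAt ℝ f x)
    (hcont : ContinuousOn (deriv f) (Ioo a b)) :
    eVariationOn f (Icc a b) ≤ nud f (Icc a b) := by
  unfold eVariationOn
  refine iSup_le ?_
  rintro ⟨n, u, hu, us⟩
  calc ∑ i ∈ Finset.range n, edist (f (u (i + 1))) (f (u i))
      ≤ ∑ i ∈ Finset.range n, nud f (Ioc (u i) (u (i + 1))) := by
        refine Finset.sum_le_sum fun i _ => ?_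
        rw [edist_comm]
        exact edist_le_nud f hf hdiff hcont (us i) (us (i + 1)) (hu (Nat.le_succ i))
    _ = nud f (Ioc (u 0) (u n)) := sum_Ioc _ hu n
    _ ≤ nud f (Icc a b) := by
        refine measure_mono fun x hx => ?_
        exact ⟨(us 0).1.trans hx.1.le, hx.2.trans (us n).2⟩

lemma lint_le_evar_of_C1 (f : ℝ → ℝ) {c d : ℝ} (hcd : c ≤ d)
    (hder : ∀ x ∈ Icc c d, HasDerivAt f (deriv f x) x)
    (hcont : ContinuousOn (deriv f) (Icc c d))
    (hfin : eVariationOn f (Icc c d) ≠ ⊤) :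
    ∫⁻ x in Icc c d, (‖deriv f x‖₊ : ℝ≥0∞) ≤ eVariationOn f (Icc c d) := by
  rcases eq_or_lt_of_le hcd with rfl | hlt
  · rw [Icc_self, setLIntegral_measure_zero _ _ (by simp)]
    exact zero_le
  have hint : IntegrableOn (fun x => |deriv f x|) (Icc c d) :=
    hcont.abs.integrableOn_compact isCompact_Icc
  have hl : ∫⁻ x in Icc c d, (‖deriv f x‖₊ : ℝ≥0∞)
      = ENNReal.ofReal (∫ x in Icc c d, |deriv f x|) := by
    rw [ofReal_integral_eq_lintegral_ofReal hint
      (Eventually.of_forall fun x => abs_nonneg _)]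
    exact lintegral_congr fun x => by
      rw [← enorm_eq_nnnorm, ← ofReal_norm_eq_enorm, Real.norm_eq_abs]
  rw [hl, ← ENNReal.ofReal_toReal hfin]
  apply ENNReal.ofReal_le_ofReal
  set V := (eVariationOn f (Icc c d)).toReal with hV
  -- real goal
  refine le_of_forall_pos_le_add fun ε hε => ?_
  set ε' := ε / (2 * (d - c)) with hε'def
  have hε' : 0 < ε' := div_pos hε (by linarith)
  obtain ⟨δ, hδ, hδprop⟩ := Metric.uniformContinuousOn_iff.mp
    (isCompact_Icc.uniformContinuousOn_of_continuous hcont) ε' hε'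
  obtain ⟨n, hn⟩ := exists_nat_gt ((d - c) / δ)
  have hn0 : 0 < (n : ℝ) := lt_trans (div_pos (by linarith) hδ) hn
  set Δ := (d - c) / n with hΔdef
  have hΔpos : 0 < Δ := div_pos (by linarith) hn0
  have hΔδ : Δ < δ := by
    rw [hΔdef, div_lt_iff₀ hn0]
    calc d - c = ((d - c) / δ) * δ := by field_simp
      _ < n * δ := by exact mul_lt_mul_of_pos_right hn hδ
      _ = δ * n := mul_comm _ _
  set t : ℕ → ℝ := fun i => c + i * Δ with htdef
  have hstep : ∀ i : ℕ, t (i + 1) - t i = Δ := by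
    intro i; simp only [htdef]; push_cast; ring
  have ht_mono : Monotone t := by
    intro i j hij
    simp only [htdef]
    have : (i : ℝ) ≤ j := Nat.cast_le.mpr hij
    nlinarith
  have ht0 : t 0 = c := by simp [htdef]
  have htn : t n = d := by
    simp only [htdef, hΔdef]
    field_simp
    ring
  have htmem : ∀ i, i ≤ n → t i ∈ Icc c d := by
    intro i hi
    constructor
    · simp only [htdef]
      nlinarith [mul_nonneg (Nat.cast_nonneg (α := ℝ) i) hΔpos.le]
    · rw [← htn]; exact ht_mono hi
  have hIccsub : ∀ i, i < n → Icc (t i) (t (i + 1)) ⊆ Icc c d := by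
    intro i hi
    exact Icc_subset_Icc (htmem i hi.le).1 (htmem (i + 1) hi).2
  have hii : ∀ i, i < n → IntervalIntegrable (fun x => |deriv f x|) volume (t i) (t (i + 1)) :=
    fun i hi => ((hcont.abs.mono (hIccsub i hi)).intervalIntegrable_of_Icc
      (ht_mono (Nat.le_succ i)))
  have hiideriv : ∀ i, i < n → IntervalIntegrable (deriv f) volume (t i) (t (i + 1)) :=
    fun i hi => ((hcont.mono (hIccsub i hi)).intervalIntegrable_of_Icc
      (ht_mono (Nat.le_succ i)))
  -- per-piece bound
  have key : ∀ i, i < n →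
      ∫ x in (t i)..(t (i + 1)), |deriv f x| ≤ |f (t (i + 1)) - f (t i)| + 2 * ε' * Δ := by
    intro i hi
    have hpq : t i ≤ t (i + 1) := ht_mono (Nat.le_succ i)
    have hpmem : t i ∈ Icc c d := htmem i hi.le
    have hnear : ∀ x ∈ Icc (t i) (t (i + 1)), |deriv f x - deriv f (t i)| ≤ ε' := by
      intro x hx
      have hdist : dist x (t i) < δ := by
        rw [Real.dist_eq, abs_of_nonneg (by linarith [hx.1])]
        have := hx.2
        have h2 := hstep i
        linarith
      have := hδprop x (hIccsub i hi hx) (t i) hpmem hdist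
      rw [Real.dist_eq] at this
      exact this.le
    have h1 : ∫ x in (t i)..(t (i + 1)), |deriv f x|
        ≤ ∫ _x in (t i)..(t (i + 1)), (|deriv f (t i)| + ε') := by
      refine intervalIntegral.integral_mono_on hpq (hii i hi)
        (intervalIntegrable_const) fun x hx => ?_
      calc |deriv f x| ≤ |deriv f (t i)| + |deriv f x - deriv f (t i)| := by
            nlinarith [abs_sub_abs_le_abs_sub (deriv f x) (deriv f (t i))]
        _ ≤ |deriv f (t i)| + ε' := by linarith [hnear x hx]
    rw [intervalIntegral.integral_const, hstep i, smul_eq_mul] at h1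
    have hftc : ∫ x in (t i)..(t (i + 1)), deriv f x = f (t (i + 1)) - f (t i) := by
      refine intervalIntegral.integral_eq_sub_of_hasDerivAt (fun x hx => ?_) (hiideriv i hi)
      rw [uIcc_of_le hpq] at hx
      exact hder x (hIccsub i hi hx)
    have h3 : ∫ x in (t i)..(t (i + 1)), (deriv f (t i) - deriv f x)
        = Δ * deriv f (t i) - (f (t (i + 1)) - f (t i)) := by
      rw [intervalIntegral.integral_sub intervalIntegrable_const (hiideriv i hi),
        intervalIntegral.integral_const, hftc, hstep i, smul_eq_mul]
    have h4 : |∫ x in (t i)..(t (i + 1)), (deriv f (t i) - deriv f x)| ≤ ε' * Δ := by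
      have hb : ∀ x ∈ Set.uIoc (t i) (t (i + 1)), ‖deriv f (t i) - deriv f x‖ ≤ ε' := by
        intro x hx
        rw [uIoc_of_le hpq] at hx
        rw [Real.norm_eq_abs, abs_sub_comm]
        exact hnear x (Ioc_subset_Icc_self hx)
      have := intervalIntegral.norm_integral_le_of_norm_le_const hb
      rw [Real.norm_eq_abs] at this
      refine this.trans (le_of_eq ?_)
      rw [abs_of_nonneg (by linarith [hstep i]), hstep i]
    have h5 : |deriv f (t i)| * Δ ≤ |f (t (i + 1)) - f (t i)| + ε' * Δ := by
      have e1 : |deriv f (t i)| * Δ = |Δ * deriv f (t i)| := by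
        rw [abs_mul, abs_of_pos hΔpos, mul_comm]
      have e2 : |Δ * deriv f (t i)| ≤ |f (t (i + 1)) - f (t i)|
          + |Δ * deriv f (t i) - (f (t (i + 1)) - f (t i))| := by
        nlinarith [abs_sub_abs_le_abs_sub (Δ * deriv f (t i)) (f (t (i + 1)) - f (t i))]
      rw [e1]
      rw [← h3] at e2
      linarith [e2, h4]
    calc ∫ x in (t i)..(t (i + 1)), |deriv f x| ≤ Δ * (|deriv f (t i)| + ε') := h1
      _ = |deriv f (t i)| * Δ + ε' * Δ := by ring
      _ ≤ |f (t (i + 1)) - f (t i)| + 2 * ε' * Δ := by linarith [h5]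
  -- sum of variations bound
  have hsum2 : ∑ i ∈ Finset.range n, |f (t (i + 1)) - f (t i)| ≤ V := by
    set u : ℕ → ℝ := fun i => t (min i n) with hudef
    have humono : Monotone u := fun i j hij => ht_mono (min_le_min hij le_rfl)
    have humem : ∀ i, u i ∈ Icc c d := fun i => htmem _ (min_le_right _ _)
    have hvar := eVariationOn.sum_le (f := f) (n := n) humono humem
    have hrw : ∀ i ∈ Finset.range n,
        edist (f (u (i + 1))) (f (u i)) = ENNReal.ofReal |f (t (i + 1)) - f (t i)| := by
      intro i hi
      rw [Finset.mem_range] at hi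
      have e1 : u i = t i := by simp [hudef, min_eq_left hi.le]
      have e2 : u (i + 1) = t (i + 1) := by simp [hudef, min_eq_left (Nat.succ_le_of_lt hi)]
      rw [e1, e2, edist_dist, Real.dist_eq]
    rw [Finset.sum_congr rfl hrw] at hvar
    have := ENNReal.toReal_mono hfin hvar
    rw [ENNReal.toReal_sum (fun i _ => ENNReal.ofReal_ne_top)] at this
    simpa [ENNReal.toReal_ofReal (abs_nonneg _)] using this
  -- assemble
  have hsplit : ∫ x in c..d, |deriv f x|
      = ∑ i ∈ Finset.range n, ∫ x in (t i)..(t (i + 1)), |deriv f x| := by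
    rw [intervalIntegral.sum_integral_adjacent_intervals hii, ht0, htn]
  calc ∫ x in Icc c d, |deriv f x| = ∫ x in c..d, |deriv f x| := by
        rw [MeasureTheory.integral_Icc_eq_integral_Ioc, intervalIntegral.integral_of_le hcd]
    _ = ∑ i ∈ Finset.range n, ∫ x in (t i)..(t (i + 1)), |deriv f x| := hsplit
    _ ≤ ∑ i ∈ Finset.range n, (|f (t (i + 1)) - f (t i)| + 2 * ε' * Δ) :=
        Finset.sum_le_sum fun i hi => key i (Finset.mem_range.mp hi)
    _ = (∑ i ∈ Finset.range n, |f (t (i + 1)) - f (t i)|) + n * (2 * ε' * Δ) := by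
        rw [Finset.sum_add_distrib, Finset.sum_const, Finset.card_range, nsmul_eq_mul]
    _ ≤ V + ε := by
        have h1 : (d - c) ≠ 0 := by linarith
        have h2 : (n : ℝ) ≠ 0 := ne_of_gt hn0
        have : (n : ℝ) * (2 * ε' * Δ) = ε := by
          rw [hε'def, hΔdef]
          field_simp
        linarith [hsum2]

lemma nud_lt_top (f : ℝ → ℝ) {c d : ℝ} (hcont : ContinuousOn (deriv f) (Icc c d)) :
    nud f (Icc c d) < ⊤ := by
  have hint : IntegrableOn (deriv f) (Icc c d) := hcont.integrableOn_compact isCompact_Icc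
  have := hint.2
  rw [HasFiniteIntegral] at this
  rw [nud_apply f measurableSet_Icc]
  exact this

lemma lint_eq_evar_good (f : ℝ → ℝ) {a b : ℝ} (hab : a ≤ b)
    (hf : ContinuousOn f (Icc a b))
    (hdiff : ∀ x ∈ Ioo a b, DifferentiableAt ℝ f x)
    (hcont : ContinuousOn (deriv f) (Ioo a b)) :
    ∫⁻ x in Icc a b, (‖deriv f x‖₊ : ℝ≥0∞) = eVariationOn f (Icc a b) := by
  refine le_antisymm ?_ ((evar_le_nud f hf hdiff hcont).trans
    (le_of_eq (nud_apply f measurableSet_Icc)))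
  rcases eq_or_lt_of_le hab with rfl | hlt
  · rw [Icc_self, setLIntegral_measure_zero _ _ (by simp)]
    exact zero_le
  rw [← nud_apply f measurableSet_Icc]
  have hIcc : nud f (Icc a b) ≤ nud f (Ioo a b) := by
    calc nud f (Icc a b) ≤ nud f (Ioo a b ∪ {a} ∪ {b}) := by
          refine measure_mono fun x hx => ?_
          rcases eq_or_lt_of_le hx.1 with rfl | h1
          · exact Or.inl (Or.inr rfl)
          rcases eq_or_lt_of_le hx.2 with rfl | h2
          · exact Or.inr rfl
          · exact Or.inl (Or.inl ⟨h1, h2⟩)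
      _ ≤ nud f (Ioo a b ∪ {a}) + nud f {b} := measure_union_le _ _
      _ ≤ nud f (Ioo a b) + nud f {a} + nud f {b} :=
          add_le_add_left (measure_union_le _ _) _
      _ = nud f (Ioo a b) := by rw [nud_singleton, nud_singleton, add_zero, add_zero]
  refine hIcc.trans ?_
  set c : ℕ → ℝ := fun n => a + (b - a) / (n + 2) with hcdef
  set e : ℕ → ℝ := fun n => b - (b - a) / (n + 2) with hedef
  have hpos : ∀ n : ℕ, 0 < (b - a) / ((n : ℝ) + 2) := fun n => div_pos (by linarith) (by positivity)
  have hhalf : ∀ n : ℕ, (b - a) / ((n : ℝ) + 2) ≤ (b - a) / 2 := by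
    intro n
    apply div_le_div_of_nonneg_left (by linarith) (by norm_num)
    linarith [Nat.cast_nonneg (α := ℝ) n]
  have hce : ∀ n, c n ≤ e n := fun n => by
    simp only [hcdef, hedef]; linarith [hhalf n]
  have hsubIoo : ∀ n, Icc (c n) (e n) ⊆ Ioo a b := by
    intro n x hx
    simp only [hcdef, hedef, mem_Icc] at hx
    exact ⟨by linarith [hpos n, hx.1], by linarith [hpos n, hx.2]⟩
  have hmono : Monotone fun n => Icc (c n) (e n) := by
    intro i j hij
    have hd : (b - a) / ((j : ℝ) + 2) ≤ (b - a) / ((i : ℝ) + 2) := by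
      apply div_le_div_of_nonneg_left (by linarith) (by positivity)
      have : (i : ℝ) ≤ j := Nat.cast_le.mpr hij
      linarith
    apply Icc_subset_Icc <;> simp only [hcdef, hedef] <;> linarith
  have hunion : Ioo a b = ⋃ n, Icc (c n) (e n) := by
    apply subset_antisymm
    · intro x hx
      set m := min (x - a) (b - x) with hm
      have hm0 : 0 < m := lt_min (by linarith [hx.1]) (by linarith [hx.2])
      obtain ⟨n, hn⟩ := exists_nat_gt ((b - a) / m)
      refine mem_iUnion.mpr ⟨n, ?_⟩
      have h2 : (b - a) / ((n : ℝ) + 2) ≤ m := by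
        rw [div_le_iff₀ (by positivity)]
        have h3 : b - a < m * n := by
          have := (div_lt_iff₀ hm0).mp hn
          linarith
        nlinarith [hm0]
      have hml : m ≤ x - a := min_le_left _ _
      have hmr : m ≤ b - x := min_le_right _ _
      constructor
      · simp only [hcdef]; linarith
      · simp only [hedef]; linarith
    · exact iUnion_subset fun n => hsubIoo n
  rw [hunion, (hmono.directed_le).measure_iUnion]
  refine iSup_le fun n => ?_
  have hfcd : ContinuousOn f (Icc (c n) (e n)) :=
    hf.mono ((hsubIoo n).trans Ioo_subset_Icc_self)
  have hdcd : ∀ x ∈ Ioo (c n) (e n), DifferentiableAt ℝ f x :=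
    fun x hx => hdiff x (hsubIoo n (Ioo_subset_Icc_self hx))
  have hccd : ContinuousOn (deriv f) (Icc (c n) (e n)) := hcont.mono (hsubIoo n)
  have hfin : eVariationOn f (Icc (c n) (e n)) ≠ ⊤ := by
    refine ne_top_of_le_ne_top ?_ (evar_le_nud f hfcd hdcd (hccd.mono Ioo_subset_Icc_self))
    exact (nud_lt_top f hccd).ne
  have hder : ∀ x ∈ Icc (c n) (e n), HasDerivAt f (deriv f x) x :=
    fun x hx => (hdiff x (hsubIoo n hx)).hasDerivAt
  calc nud f (Icc (c n) (e n)) = ∫⁻ x in Icc (c n) (e n), (‖deriv f x‖₊ : ℝ≥0∞) :=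
        nud_apply f measurableSet_Icc
    _ ≤ eVariationOn f (Icc (c n) (e n)) := lint_le_evar_of_C1 f (hce n) hder hccd hfin
    _ ≤ eVariationOn f (Icc a b) := eVariationOn.mono f
        (Icc_subset_Icc (by simp only [hcdef]; linarith [hpos n])
          (by simp only [hedef]; linarith [hpos n]))

lemma lint_eq_evar_S (n : ℕ) : ∀ (S : Finset ℝ), S.card ≤ n → ∀ (f : ℝ → ℝ) (a b : ℝ),
    a ≤ b → ContinuousOn f (Icc a b) →
    (∀ x ∈ Ioo a b \ (S : Set ℝ), DifferentiableAt ℝ f x) →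
    ContinuousOn (deriv f) (Ioo a b \ (S : Set ℝ)) →
    ∫⁻ x in Icc a b, (‖deriv f x‖₊ : ℝ≥0∞) = eVariationOn f (Icc a b) := by
  induction n with
  | zero =>
    intro S hS f a b hab hf hdiff hcont
    have hS0 : S = ∅ := Finset.card_eq_zero.mp (Nat.le_zero.mp hS)
    subst hS0
    simp only [Finset.coe_empty, diff_empty] at hdiff hcont
    exact lint_eq_evar_good f hab hf hdiff hcont
  | succ n ih =>
    intro S hS f a b hab hf hdiff hcont
    by_cases hy : ∃ y ∈ S, y ∈ Ioo a b
    · obtain ⟨y, hyS, hyab⟩ := hy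
      set S' := S.erase y with hS'
      have hcard : S'.card ≤ n := by
        rw [hS', Finset.card_erase_of_mem hyS]
        omega
      have hay : a ≤ y := hyab.1.le
      have hyb : y ≤ b := hyab.2.le
      have hsub1 : Ioo a y \ (S' : Set ℝ) ⊆ Ioo a b \ (S : Set ℝ) := by
        rintro x ⟨hx1, hx2⟩
        refine ⟨⟨hx1.1, hx1.2.trans hyab.2⟩, fun hxS => hx2 ?_⟩
        exact Finset.mem_coe.mpr (Finset.mem_erase.mpr ⟨ne_of_lt hx1.2, hxS⟩)
      have hsub2 : Ioo y b \ (S' : Set ℝ) ⊆ Ioo a b \ (S : Set ℝ) := by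
        rintro x ⟨hx1, hx2⟩
        refine ⟨⟨hyab.1.trans hx1.1, hx1.2⟩, fun hxS => hx2 ?_⟩
        exact Finset.mem_coe.mpr (Finset.mem_erase.mpr ⟨(ne_of_lt hx1.1).symm, hxS⟩)
      have h1 := ih S' hcard f a y hay (hf.mono (Icc_subset_Icc_right hyb))
        (fun x hx => hdiff x (hsub1 hx)) (hcont.mono hsub1)
      have h2 := ih S' hcard f y b hyb (hf.mono (Icc_subset_Icc_left hay))
        (fun x hx => hdiff x (hsub2 hx)) (hcont.mono hsub2)
      have hL : ∫⁻ x in Icc a b, (‖deriv f x‖₊ : ℝ≥0∞)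
          = (∫⁻ x in Icc a y, (‖deriv f x‖₊ : ℝ≥0∞)) + ∫⁻ x in Icc y b, (‖deriv f x‖₊ : ℝ≥0∞) := by
        have hdisj : Disjoint (Icc a y) (Ioc y b) := by
          rw [Set.disjoint_left]; intro x h1 h2; exact absurd h1.2 (not_le.mpr h2.1)
        rw [← Icc_union_Ioc_eq_Icc hay hyb, lintegral_union measurableSet_Ioc hdisj]
        congr 1
        exact setLIntegral_congr MeasureTheory.Ioc_ae_eq_Icc
      have hR := eVariationOn.Icc_add_Icc f (s := univ) hay hyb (mem_univ y)
      simp only [univ_inter] at hR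
      rw [hL, h1, h2, hR]
    · push_neg at hy
      have hdiff' : ∀ x ∈ Ioo a b, DifferentiableAt ℝ f x := by
        intro x hx
        exact hdiff x ⟨hx, fun hxS => hy x (Finset.mem_coe.mp hxS) hx⟩
      have hsub : Ioo a b ⊆ Ioo a b \ (S : Set ℝ) :=
        fun x hx => ⟨hx, fun hxS => hy x (Finset.mem_coe.mp hxS) hx⟩
      exact lint_eq_evar_good f hab hf hdiff' (hcont.mono hsub)

lemma lint_eq_evar (f : ℝ → ℝ) (h : PiecewiseC1 f) :
    ∫⁻ x in Icc (0:ℝ) 1, (‖deriv f x‖₊ : ℝ≥0∞) = eVariationOn f (Icc 0 1) := by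
  obtain ⟨hf, S, hd, hc⟩ := h
  have hsub : Ioo (0:ℝ) 1 \ (S : Set ℝ) ⊆ Icc (0:ℝ) 1 \ (S : Set ℝ) :=
    fun x hx => ⟨Ioo_subset_Icc_self hx.1, hx.2⟩
  exact lint_eq_evar_S S.card S le_rfl f 0 1 zero_le_one hf
    (fun x hx => hd x (hsub hx)) (hc.mono hsub)

lemma normD1_eq_lint (f : ℝ → ℝ) :
    normD1 f = (∫⁻ x in Icc (0:ℝ) 1, (‖deriv f x‖₊ : ℝ≥0∞)).toReal := by
  rw [normD1, intervalIntegral.integral_of_le zero_le_one,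
    ← MeasureTheory.integral_Icc_eq_integral_Ioc]
  have hcoe : ∀ x : ℝ, (‖deriv f x‖₊ : ℝ≥0∞) = ENNReal.ofReal |deriv f x| := fun x => by
    rw [← enorm_eq_nnnorm, ← ofReal_norm_eq_enorm, Real.norm_eq_abs]
  by_cases hi : IntegrableOn (fun x => |deriv f x|) (Icc (0:ℝ) 1)
  · have := ofReal_integral_eq_lintegral_ofReal hi
      (Eventually.of_forall fun x => abs_nonneg _)
    rw [lintegral_congr fun x => hcoe x]
    rw [← this, ENNReal.toReal_ofReal (integral_nonneg fun x => abs_nonneg _)]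
  · rw [integral_undef hi]
    have hmeas : AEStronglyMeasurable (fun x => |deriv f x|)
        (volume.restrict (Icc (0:ℝ) 1)) :=
      ((measurable_deriv f).abs).aestronglyMeasurable
    have htop : ∫⁻ x in Icc (0:ℝ) 1, (‖deriv f x‖₊ : ℝ≥0∞) = ⊤ := by
      by_contra hne
      refine hi ⟨hmeas, ?_⟩
      rw [HasFiniteIntegral]
      have : ∀ x : ℝ, ‖|deriv f x|‖ₑ = (‖deriv f x‖₊ : ℝ≥0∞) := fun x => by
        simp [Real.nnnorm_abs, enorm_eq_nnnorm]
      rw [lintegral_congr this]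
      exact lt_top_iff_ne_top.mpr hne
    rw [htop, ENNReal.toReal_top]

lemma image_Icc_of_InG (g : ℝ → ℝ) (hg : InG g) : g '' Icc 0 1 = Icc 0 1 := by
  obtain ⟨⟨⟨hcont, _⟩, _⟩, hmono, h0, h1⟩ := hg
  apply subset_antisymm
  · rintro _ ⟨x, hx, rfl⟩
    constructor
    · rw [← h0]; exact hmono (left_mem_Icc.mpr zero_le_one) hx hx.1
    · rw [← h1]; exact hmono hx (right_mem_Icc.mpr zero_le_one) hx.2
  · have := intermediate_value_Icc zero_le_one hcont
    rw [h0, h1] at this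
    exact this

/-- if `s ∘ g₁ = φ ∘ g₂` on `[0,1]` for `g₁, g₂ ∈ 𝒢`, then
`‖s'‖₁ = ‖φ'‖₁`. -/
theorem normD1_eq_of_match (s φ g₁ g₂ : ℝ → ℝ)
    (hs : C1FF s) (hφ : C1FF φ) (hg₁ : InG g₁) (hg₂ : InG g₂)
    (hmatch : ∀ t ∈ Set.Icc (0:ℝ) 1, s (g₁ t) = φ (g₂ t)) :
    normD1 s = normD1 φ := by
  have hvar : eVariationOn s (Icc 0 1) = eVariationOn φ (Icc 0 1) := by
    calc eVariationOn s (Icc 0 1) = eVariationOn s (g₁ '' Icc 0 1) := by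
          rw [image_Icc_of_InG g₁ hg₁]
      _ = eVariationOn (s ∘ g₁) (Icc 0 1) :=
          (eVariationOn.comp_eq_of_monotoneOn s g₁ hg₁.2.1).symm
      _ = eVariationOn (φ ∘ g₂) (Icc 0 1) :=
          eVariationOn.eq_of_eqOn fun t ht => hmatch t ht
      _ = eVariationOn φ (g₂ '' Icc 0 1) :=
          eVariationOn.comp_eq_of_monotoneOn φ g₂ hg₂.2.1
      _ = eVariationOn φ (Icc 0 1) := by rw [image_Icc_of_InG g₂ hg₂]
  rw [normD1_eq_lint, normD1_eq_lint, lint_eq_evar s hs.1, lint_eq_evar φ hφ.1, hvar]
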